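/- Let μ, ν be finite monotone measures. If there exists a nonnegative measurable f with μ(A) = ∫_A f dν (Choquet integral) for all measurable A, then μ is strongly absolutely continuous w.r.t. ν: for every ε > 0 there is δ > 0 such that ν(A) < δ implies μ(A) < ε. -/

import Mathlib

open MeasureTheory Filter Set
open scoped NNReal ENNReal NNRat

variable {U : Type*}

/-- The Choquet integral of `f` w.r.t. the set function `ν` on the set `A`:
`∫₀^∞ ν({f ≥ t} ∩ A) dt`. -/
noncomputable def Choquet [MeasurableSpace U] (ν : Set U → ENNReal) (f : U → ENNReal)
    (A : Set U) : ENNReal :=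
  ∫⁻ t in Set.Ioi (0 : ℝ), ν ({x | ENNReal.ofReal t ≤ f x} ∩ A)

/-- A monotone measure: vanishes at `∅` and is monotone on measurable sets. -/
def IsMonotoneMeasure [MeasurableSpace U] (ν : Set U → ENNReal) : Prop :=
  ν ∅ = 0 ∧ ∀ A B : Set U, MeasurableSet A → MeasurableSet B → A ⊆ B → ν A ≤ ν B

/-- The decomposition inequalities for the ordered pair `(μ, ν)` w.r.t. a family
`A : NNRat → Set U`, stated additively (no truncated subtraction):
`α(ν(S∩A_α) − ν(S∩A_β)) ≤ μ(S∩A_α) − μ(S∩A_β) ≤ β(ν(S∩A_α) − ν(S∩A_β))`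
for all measurable `S` of finite `μ`- and `ν`-measure and rationals `α < β`. -/
def DecompIneq [MeasurableSpace U] (μ ν : Set U → ENNReal) (A : NNRat → Set U) : Prop :=
  ∀ S : Set U, MeasurableSet S → μ S ≠ ⊤ → ν S ≠ ⊤ →
    ∀ α β : NNRat, α < β →
      (((α : ℝ≥0) : ENNReal) * ν (S ∩ A α) + μ (S ∩ A β)
          ≤ μ (S ∩ A α) + ((α : ℝ≥0) : ENNReal) * ν (S ∩ A β)) ∧
      (μ (S ∩ A α) + ((β : ℝ≥0) : ENNReal) * ν (S ∩ A β)
          ≤ ((β : ℝ≥0) : ENNReal) * ν (S ∩ A α) + μ (S ∩ A β))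

/-- The decomposition property: a decreasing family of measurable sets with `A 0 = univ`
satisfying the decomposition inequalities. -/
def DecompProp [MeasurableSpace U] (μ ν : Set U → ENNReal) (A : NNRat → Set U) : Prop :=
  (∀ α, MeasurableSet (A α)) ∧ A 0 = Set.univ ∧ Antitone A ∧ DecompIneq μ ν A

/-- Comonotonicity for `ℝ≥0∞`-valued functions. -/
def Comonotone (f g : U → ENNReal) : Prop :=
  ∀ s t : U, (f s ≤ f t ∧ g s ≤ g t) ∨ (f t ≤ f s ∧ g t ≤ g s)

theorem rn_implies_strong_abs_continuous [MeasurableSpace U] (μ ν : Set U → ENNReal)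
    (hμ : IsMonotoneMeasure μ) (hν : IsMonotoneMeasure ν)
    (hμfin : μ Set.univ ≠ ⊤) (hνfin : ν Set.univ ≠ ⊤)
    (f : U → ENNReal) (hf : Measurable f)
    (hRN : ∀ A : Set U, MeasurableSet A → μ A = Choquet ν f A) :
    ∀ ε : ENNReal, 0 < ε → ∃ δ : ENNReal, 0 < δ ∧
      ∀ A : Set U, MeasurableSet A → ν A < δ → μ A < ε := by
  intro ε hε
  -- dispose of the case ε = ⊤
  rcases eq_or_ne ε ⊤ with hεtop | hεtop
  · refine ⟨1, one_pos, fun A hA _ => ?_⟩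
    have : μ A ≤ μ Set.univ := hμ.2 A Set.univ hA MeasurableSet.univ (Set.subset_univ _)
    exact lt_of_le_of_lt this (hεtop ▸ lt_top_iff_ne_top.2 hμfin)
  set ε' : ENNReal := ε / 2 with hε'
  have hε'0 : 0 < ε' := ENNReal.div_pos hε.ne' (by norm_num)
  have hε'top : ε' ≠ ⊤ := by
    simp [hε', ENNReal.div_eq_top, hεtop]
  -- the tail function
  set h : ℝ → ENNReal := fun t => ν {x | ENNReal.ofReal t ≤ f x} with hh
  have hSmeas : ∀ t : ℝ, MeasurableSet {x | ENNReal.ofReal t ≤ f x} :=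
    fun t => measurableSet_le measurable_const hf
  have hanti : Antitone h := by
    intro s t hst
    exact hν.2 _ _ (hSmeas t) (hSmeas s)
      (fun x hx => le_trans (ENNReal.ofReal_le_ofReal hst) hx)
  have hmeas : Measurable h := hanti.measurable
  have hM : (∫⁻ t in Set.Ioi (0 : ℝ), h t) = μ Set.univ := by
    rw [hRN Set.univ MeasurableSet.univ]
    simp [Choquet, hh]
  set M : ENNReal := ∫⁻ t in Set.Ioi (0 : ℝ), h t with hMdef
  have hMtop : M ≠ ⊤ := hM ▸ hμfin
  -- split the integral at n
  have hsplit : ∀ n : ℕ, 1 ≤ n →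
      M = (∫⁻ t in Set.Ioc (0 : ℝ) n, h t) + ∫⁻ t in Set.Ioi (n : ℝ), h t := by
    intro n hn
    have h0n : (0 : ℝ) ≤ n := Nat.cast_nonneg n
    rw [hMdef, ← Set.Ioc_union_Ioi_eq_Ioi h0n,
      lintegral_union measurableSet_Ioi (Set.Ioc_disjoint_Ioi le_rfl)]
  -- sup of truncated integrals is M
  have hsup : (⨆ n : ℕ, ∫⁻ t in Set.Ioc (0 : ℝ) n, h t) = M := by
    have hpt : ∀ t : ℝ, (⨆ n : ℕ, (Set.Ioc (0 : ℝ) n).indicator h t)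
        = (Set.Ioi (0 : ℝ)).indicator h t := by
      intro t
      rcases le_or_gt t 0 with ht | ht
      · simp [Set.indicator_of_notMem, ht.not_gt, fun n : ℕ => (by
          intro hmem
          exact ht.not_gt hmem.1 : t ∉ Set.Ioc (0 : ℝ) n)]
      · obtain ⟨n, hn⟩ := exists_nat_ge t
        rw [Set.indicator_of_mem (Set.mem_Ioi.2 ht)]
        apply le_antisymm
        · exact iSup_le fun m => Set.indicator_le' (fun _ _ => le_rfl) (fun _ _ => zero_le) t
        · have hmem : t ∈ Set.Ioc (0 : ℝ) (n : ℝ) := ⟨ht, hn⟩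
          exact le_iSup_of_le n (ge_of_eq (Set.indicator_of_mem hmem h))
    calc (⨆ n : ℕ, ∫⁻ t in Set.Ioc (0 : ℝ) n, h t)
        = ⨆ n : ℕ, ∫⁻ t, (Set.Ioc (0 : ℝ) n).indicator h t := by
          refine iSup_congr fun n => ?_
          rw [lintegral_indicator measurableSet_Ioc]
      _ = ∫⁻ t, ⨆ n : ℕ, (Set.Ioc (0 : ℝ) n).indicator h t := by
          refine (lintegral_iSup (fun n => hmeas.indicator measurableSet_Ioc) ?_).symm
          intro m k hmk t
          refine Set.indicator_le_indicator_of_subset ?_ (fun _ => zero_le) t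
          exact Set.Ioc_subset_Ioc le_rfl (Nat.cast_le.2 hmk)
      _ = ∫⁻ t, (Set.Ioi (0 : ℝ)).indicator h t := by
          exact lintegral_congr hpt
      _ = M := by rw [hMdef, lintegral_indicator measurableSet_Ioi]
  -- find n with small tail
  have htail : ∃ n : ℕ, 1 ≤ n ∧ (∫⁻ t in Set.Ioi (n : ℝ), h t) < ε' := by
    rcases lt_or_ge M ε' with hMε | hMε
    · refine ⟨1, le_rfl, lt_of_le_of_lt ?_ hMε⟩
      rw [hsplit 1 le_rfl]
      exact le_add_self
    · have hlt : M - ε' < M := ENNReal.sub_lt_self hMtop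
        ((hε'0.trans_le hMε).ne') hε'0.ne'
      obtain ⟨n, hn⟩ := lt_iSup_iff.1
        (show M - ε' < ⨆ n : ℕ, ∫⁻ t in Set.Ioc (0 : ℝ) n, h t by rw [hsup]; exact hlt)
      refine ⟨n + 1, Nat.le_add_left 1 n, ?_⟩
      by_contra hcon
      push_neg at hcon
      have hIle : (∫⁻ t in Set.Ioc (0 : ℝ) n, h t)
          ≤ ∫⁻ t in Set.Ioc (0 : ℝ) (n + 1 : ℕ), h t := by
        apply lintegral_mono_set
        exact Set.Ioc_subset_Ioc le_rfl (by push_cast; linarith)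
      have : M - ε' + ε' < (∫⁻ t in Set.Ioc (0 : ℝ) (n + 1 : ℕ), h t)
          + ∫⁻ t in Set.Ioi ((n + 1 : ℕ) : ℝ), h t :=
        ENNReal.add_lt_add_of_lt_of_le hε'top (lt_of_lt_of_le hn hIle) hcon
      rw [tsub_add_cancel_of_le hMε, ← hsplit (n+1) (Nat.le_add_left 1 n)] at this
      exact lt_irrefl M this
  obtain ⟨n, hn1, hnT⟩ := htail
  -- choose δ
  refine ⟨ε' / n, ENNReal.div_pos hε'0.ne' (by simp), fun A hA hνA => ?_⟩
  -- bound μ A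
  have hbound : μ A ≤ (n : ENNReal) * ν A + ∫⁻ t in Set.Ioi (n : ℝ), h t := by
    rw [hRN A hA]
    unfold Choquet
    have hB : Measurable (fun t : ℝ =>
        (Set.Ioc (0 : ℝ) n).indicator (fun _ => ν A) t + (Set.Ioi (n : ℝ)).indicator h t) :=
      ((measurable_const.indicator measurableSet_Ioc).add (hmeas.indicator measurableSet_Ioi))
    calc (∫⁻ t in Set.Ioi (0 : ℝ), ν ({x | ENNReal.ofReal t ≤ f x} ∩ A))
        ≤ ∫⁻ t in Set.Ioi (0 : ℝ),
            ((Set.Ioc (0 : ℝ) n).indicator (fun _ => ν A) t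
              + (Set.Ioi (n : ℝ)).indicator h t) := by
          refine setLIntegral_mono hB (fun t ht => ?_)
          rcases le_or_gt t n with htn | htn
          · have h1 : (Set.Ioc (0 : ℝ) n).indicator (fun _ => ν A) t = ν A :=
              Set.indicator_of_mem (Set.mem_Ioc.2 ⟨ht, htn⟩) _
            rw [h1]
            exact le_add_right (hν.2 _ _ ((hSmeas t).inter hA) hA Set.inter_subset_right)
          · have h2 : (Set.Ioi (n : ℝ)).indicator h t = h t :=
              Set.indicator_of_mem htn _
            rw [h2]
            exact le_add_left (hν.2 _ _ ((hSmeas t).inter hA) (hSmeas t)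
              Set.inter_subset_left)
      _ = (∫⁻ t in Set.Ioi (0 : ℝ), (Set.Ioc (0 : ℝ) n).indicator (fun _ => ν A) t)
            + ∫⁻ t in Set.Ioi (0 : ℝ), (Set.Ioi (n : ℝ)).indicator h t :=
          lintegral_add_left (measurable_const.indicator measurableSet_Ioc) _
      _ = (n : ENNReal) * ν A + ∫⁻ t in Set.Ioi (n : ℝ), h t := by
          congr 1
          · rw [lintegral_indicator measurableSet_Ioc,
              Measure.restrict_restrict measurableSet_Ioc]
            have : Set.Ioc (0 : ℝ) n ∩ Set.Ioi (0 : ℝ) = Set.Ioc (0 : ℝ) n := by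
              ext t; constructor
              · exact fun ht => ht.1
              · exact fun ht => ⟨ht, ht.1⟩
            rw [this, lintegral_const, Measure.restrict_apply MeasurableSet.univ,
              Set.univ_inter, Real.volume_Ioc]
            simp [mul_comm]
          · rw [lintegral_indicator measurableSet_Ioi,
              Measure.restrict_restrict measurableSet_Ioi]
            rw [Set.Ioi_inter_Ioi, max_eq_left (Nat.cast_nonneg n)]
  -- conclude
  have hfirst : (n : ENNReal) * ν A ≤ ε' :=
    le_trans (mul_le_mul_right hνA.le _) ENNReal.mul_div_le
  have : μ A < ε' + ε' :=
    lt_of_le_of_lt hbound (ENNReal.add_lt_add_of_le_of_lt (hfirst.trans_lt (lt_top_iff_ne_top.2 hε'top)).ne hfirst hnT)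
  rwa [hε', ENNReal.add_halves] at this
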